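/- arXiv:0810.3695 — 2 statements merged into one kernel-verified Lean document; each statement's English description precedes it below -/
import Mathlib

section
/- Let H be a subgroup of the Weyl–Heisenberg group G that intersects the center of G trivially. Then the number of distinct conjugates of H in G, i.e. the cardinality of the set {g⁻¹Hg : g ∈ G}, equals the cardinality of S_H. -/
/-- Dot product of two vectors over `ZMod p`. -/
def dot {p n : ℕ} (u v : Fin n → ZMod p) : ZMod p := ∑ i, u i * v i

/-- The underlying set of the Weyl–Heisenberg group: triples `(x, y, z)`. -/
@[ext] structure WH (p n : ℕ) where
  x : Fin n → ZMod p
  y : Fin n → ZMod p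
  z : ZMod p

namespace WH

variable {p n : ℕ}

/-- Multiplication `(x,y,z)·(x',y',z') = (x+x', y+y', z+z'+x'·y)`. -/
def wmul (g h : WH p n) : WH p n := ⟨g.x + h.x, g.y + h.y, g.z + h.z + dot h.x g.y⟩

def wone : WH p n := ⟨0, 0, 0⟩

def winv (g : WH p n) : WH p n := ⟨-g.x, -g.y, dot g.x g.y - g.z⟩

instance : Group (WH p n) where
  mul := wmul
  one := wone
  inv := winv
  mul_assoc g h k := by
    show wmul (wmul g h) k = wmul g (wmul h k)
    simp only [wmul, dot, mk.injEq, Pi.add_apply, mul_add, add_mul,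
      Finset.sum_add_distrib]
    refine ⟨by abel, by abel, by ring⟩
  one_mul g := by
    show wmul wone g = g
    obtain ⟨x, y, z⟩ := g
    simp [wmul, wone, dot]
  mul_one g := by
    show wmul g wone = g
    obtain ⟨x, y, z⟩ := g
    simp [wmul, wone, dot]
  inv_mul_cancel g := by
    show wmul (winv g) g = wone
    obtain ⟨x, y, z⟩ := g
    simp only [wmul, winv, wone, dot, mk.injEq, Pi.neg_apply, neg_mul]
    refine ⟨by abel, by abel, ?_⟩
    simp [Finset.sum_neg_distrib]

theorem mul_def (g h : WH p n) :
    g * h = ⟨g.x + h.x, g.y + h.y, g.z + h.z + dot h.x g.y⟩ := rfl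

theorem one_def : (1 : WH p n) = ⟨0, 0, 0⟩ := rfl

end WH

/-- `S_H`: the pairs `(x,y)` occurring in `H`. -/
def SH {p n : ℕ} (H : Subgroup (WH p n)) : Set ((Fin n → ZMod p) × (Fin n → ZMod p)) :=
  {v | ∃ z : ZMod p, (⟨v.1, v.2, z⟩ : WH p n) ∈ H}

/-- Symplectic inner product `⟨(x,y),(x',y')⟩ = x·y' - y·x'`. -/
def symp {p n : ℕ} (v w : (Fin n → ZMod p) × (Fin n → ZMod p)) : ZMod p :=
  dot v.1 w.2 - dot v.2 w.1

/-- Orthogonal complement under the symplectic inner product. -/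
def sperp {p n : ℕ} (S : Set ((Fin n → ZMod p) × (Fin n → ZMod p))) :
    Set ((Fin n → ZMod p) × (Fin n → ZMod p)) :=
  {v | ∀ s ∈ S, symp v s = 0}
namespace WH

variable {p n : ℕ}

theorem inv_def (g : WH p n) : g⁻¹ = ⟨-g.x, -g.y, dot g.x g.y - g.z⟩ := rfl

theorem dot_add_left (u v w : Fin n → ZMod p) : dot (u + v) w = dot u w + dot v w := by
  simp [dot, add_mul, Finset.sum_add_distrib]

theorem dot_add_right (u v w : Fin n → ZMod p) : dot u (v + w) = dot u v + dot u w := by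
  simp [dot, mul_add, Finset.sum_add_distrib]

theorem dot_neg_left (u w : Fin n → ZMod p) : dot (-u) w = -dot u w := by
  simp [dot, neg_mul]

theorem dot_neg_right (u w : Fin n → ZMod p) : dot u (-w) = -dot u w := by
  simp [dot, mul_neg]

theorem dot_zero_left (w : Fin n → ZMod p) : dot 0 w = 0 := by simp [dot]

theorem dot_zero_right (w : Fin n → ZMod p) : dot w 0 = 0 := by simp [dot]

theorem dot_smul_left (c : ZMod p) (u w : Fin n → ZMod p) :
    dot (c • u) w = c * dot u w := by
  simp [dot, Finset.mul_sum, mul_assoc]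

theorem dot_smul_right (c : ZMod p) (u w : Fin n → ZMod p) :
    dot u (c • w) = c * dot u w := by
  simp [dot, Finset.mul_sum, mul_left_comm]

theorem conj_eq (g h : WH p n) :
    g⁻¹ * h * g = ⟨h.x, h.y, h.z + (dot g.x h.y - dot h.x g.y)⟩ := by
  rw [inv_def, mul_def, mul_def]
  simp only [mk.injEq]
  refine ⟨by abel, by abel, ?_⟩
  simp only [dot_add_right, dot_neg_left, dot_neg_right]
  ring

theorem central_mem (t : ZMod p) : (⟨0, 0, t⟩ : WH p n) ∈ Subgroup.center (WH p n) := by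
  rw [Subgroup.mem_center_iff]
  intro g
  rw [mul_def, mul_def]
  simp only [mk.injEq]
  exact ⟨by abel, by abel, by simp [dot_zero_left, dot_zero_right]; ring⟩

end WH

section main

variable {p n : ℕ}

/-- The "phase space" vector space. -/
abbrev Vs (p n : ℕ) := (Fin n → ZMod p) × (Fin n → ZMod p)

/-- The linear functional `w ↦ v.1·w.2 - w.1·v.2`. -/
def lamlin (v : Vs p n) : Vs p n →ₗ[ZMod p] ZMod p where
  toFun w := dot v.1 w.2 - dot w.1 v.2
  map_add' a b := by
    simp only [Prod.fst_add, Prod.snd_add, WH.dot_add_left, WH.dot_add_right]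
    ring
  map_smul' c a := by
    simp only [Prod.smul_fst, Prod.smul_snd, WH.dot_smul_left, WH.dot_smul_right,
      RingHom.id_apply, smul_eq_mul]
    ring

theorem lamlin_apply (v w : Vs p n) : lamlin v w = dot v.1 w.2 - dot w.1 v.2 := rfl

theorem lamlin_surjective [Fact p.Prime] :
    Function.Surjective (lamlin (p := p) (n := n)) := by
  intro φ
  refine ⟨(fun i => φ (0, fun j => if i = j then 1 else 0),
      fun i => -φ (fun j => if i = j then 1 else 0, 0)), ?_⟩
  apply LinearMap.ext
  intro w
  have h1 : φ (w.1, 0) = ∑ i, w.1 i * φ (fun j => if i = j then 1 else 0, 0) := by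
    have := LinearMap.pi_apply_eq_sum_univ
      (φ.comp (LinearMap.inl (ZMod p) (Fin n → ZMod p) (Fin n → ZMod p))) w.1
    simpa only [LinearMap.coe_comp, Function.comp_apply, LinearMap.coe_inl,
      smul_eq_mul] using this
  have h2 : φ (0, w.2) = ∑ i, w.2 i * φ (0, fun j => if i = j then 1 else 0) := by
    have := LinearMap.pi_apply_eq_sum_univ
      (φ.comp (LinearMap.inr (ZMod p) (Fin n → ZMod p) (Fin n → ZMod p))) w.2
    simpa only [LinearMap.coe_comp, Function.comp_apply, LinearMap.coe_inr,
      smul_eq_mul] using this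
  have h3 : φ w = φ (w.1, 0) + φ (0, w.2) := by
    rw [← map_add, Prod.mk_add_mk, add_zero, zero_add]
  rw [lamlin_apply, h3, h1, h2]
  simp only [dot, mul_neg, Finset.sum_neg_distrib, sub_neg_eq_add]
  rw [add_comm]
  congr 1 <;> exact Finset.sum_congr rfl fun i _ => mul_comm _ _

variable [Fact p.Prime]

/-- `S_H` as an additive subgroup. -/
def SHadd (H : Subgroup (WH p n)) : AddSubgroup (Vs p n) where
  carrier := SH H
  zero_mem' := ⟨0, show (⟨0, 0, 0⟩ : WH p n) ∈ H from WH.one_def ▸ H.one_mem⟩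
  add_mem' := by
    rintro a b ⟨za, ha⟩ ⟨zb, hb⟩
    exact ⟨za + zb + dot b.1 a.2, H.mul_mem ha hb⟩
  neg_mem' := by
    rintro a ⟨z, ha⟩
    exact ⟨dot a.1 a.2 - z, H.inv_mem ha⟩

/-- `S_H` as a `ZMod p`-submodule. -/
def Smod (H : Subgroup (WH p n)) : Submodule (ZMod p) (Vs p n) :=
  AddSubgroup.toZModSubmodule p (SHadd H)

theorem mem_Smod {H : Subgroup (WH p n)} {v : Vs p n} : v ∈ Smod H ↔ v ∈ SH H := Iff.rfl

/-- The base point of the fibre over `v`. -/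
def gvF (v : Vs p n) : WH p n := ⟨v.1, v.2, 0⟩

/-- The conjugate of `H` by `gvF v`. -/
def Fconj (H : Subgroup (WH p n)) (v : Vs p n) : Subgroup (WH p n) :=
  Subgroup.map (MulAut.conj (gvF v)⁻¹).toMonoidHom H

theorem coe_Fconj (H : Subgroup (WH p n)) (v : Vs p n) :
    (Fconj H v : Set (WH p n)) = (fun h => (gvF v)⁻¹ * h * (gvF v)) '' (H : Set (WH p n)) := by
  rw [Fconj, Subgroup.coe_map]
  congr 1
  funext h
  simp [MulAut.conj_apply]

theorem mem_Fconj {H : Subgroup (WH p n)} {v : Vs p n} {a : WH p n} :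
    a ∈ Fconj H v ↔ ∃ h ∈ H,
      (⟨h.x, h.y, h.z + (dot v.1 h.y - dot h.x v.2)⟩ : WH p n) = a := by
  rw [Fconj, Subgroup.mem_map]
  constructor
  · rintro ⟨h, hh, rfl⟩
    refine ⟨h, hh, ?_⟩
    show _ = (gvF v)⁻¹ * h * ((gvF v)⁻¹)⁻¹
    rw [inv_inv, WH.conj_eq]
    rfl
  · rintro ⟨h, hh, rfl⟩
    refine ⟨h, hh, ?_⟩
    show (gvF v)⁻¹ * h * ((gvF v)⁻¹)⁻¹ = _
    rw [inv_inv, WH.conj_eq]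
    rfl

/-- The restricted functional. -/
def Phi (H : Subgroup (WH p n)) (v : Vs p n) : Module.Dual (ZMod p) (Smod H) :=
  (lamlin v).comp (Smod H).subtype

theorem Phi_surjective (H : Subgroup (WH p n)) : Function.Surjective (Phi H) := by
  have h1 : Function.Surjective ((Smod H).subtype.dualMap) :=
    LinearMap.dualMap_surjective_of_injective (Submodule.injective_subtype _)
  have h2 : Phi H = ((Smod H).subtype.dualMap) ∘ lamlin := by
    funext v
    rfl
  rw [h2]
  exact h1.comp lamlin_surjective

theorem Phi_eq_iff {H : Subgroup (WH p n)} {v w : Vs p n} :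
    Phi H v = Phi H w ↔ ∀ s ∈ SH H, lamlin v s = lamlin w s := by
  rw [LinearMap.ext_iff]
  constructor
  · intro h s hs
    exact h ⟨s, hs⟩
  · intro h s
    exact h s s.2

theorem central_eliminate {H : Subgroup (WH p n)}
    (hZ : H ⊓ Subgroup.center (WH p n) = ⊥) {t : ZMod p}
    (ht : (⟨0, 0, t⟩ : WH p n) ∈ H) : t = 0 := by
  have h1 : (⟨0, 0, t⟩ : WH p n) ∈ H ⊓ Subgroup.center (WH p n) :=
    ⟨ht, WH.central_mem t⟩
  rw [hZ, Subgroup.mem_bot] at h1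
  exact congrArg WH.z h1

theorem Fconj_eq_iff {H : Subgroup (WH p n)}
    (hZ : H ⊓ Subgroup.center (WH p n) = ⊥) {v w : Vs p n} :
    Fconj H v = Fconj H w ↔ Phi H v = Phi H w := by
  rw [Phi_eq_iff]
  constructor
  · intro hEq s hs
    obtain ⟨z, hz⟩ := hs
    have h1 : (⟨s.1, s.2, z + (dot v.1 s.2 - dot s.1 v.2)⟩ : WH p n) ∈ Fconj H v :=
      mem_Fconj.mpr ⟨⟨s.1, s.2, z⟩, hz, rfl⟩
    rw [hEq] at h1
    obtain ⟨h', hh', hcon⟩ := mem_Fconj.mp h1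
    obtain ⟨hx, hy, hzc⟩ := WH.mk.injEq .. ▸ hcon
    -- `h'⁻¹ * ⟨s.1, s.2, z⟩ ∈ H` is central
    have hmem : (⟨s.1, s.2, z⟩ : WH p n)⁻¹ * h' ∈ H :=
      H.mul_mem (H.inv_mem hz) hh'
    have hval : (⟨s.1, s.2, z⟩ : WH p n)⁻¹ * h' =
        ⟨0, 0, (dot v.1 s.2 - dot s.1 v.2) - (dot w.1 s.2 - dot s.1 w.2)⟩ := by
      rw [WH.inv_def, WH.mul_def]
      simp only [hx, hy, WH.mk.injEq]
      refine ⟨by abel, by abel, ?_⟩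
      have hz' : h'.z = z + (dot v.1 s.2 - dot s.1 v.2) - (dot w.1 s.2 - dot s.1 w.2) := by
        have := hzc
        rw [hx, hy] at this
        linear_combination this
      rw [hz', WH.dot_neg_right]
      ring
    rw [hval] at hmem
    have h0 := central_eliminate hZ hmem
    rw [lamlin_apply, lamlin_apply]
    linear_combination h0
  · intro hAll
    ext a
    rw [mem_Fconj, mem_Fconj]
    constructor
    · rintro ⟨h, hh, rfl⟩
      refine ⟨h, hh, ?_⟩
      have := hAll (h.x, h.y) ⟨h.z, hh⟩
      rw [lamlin_apply, lamlin_apply] at this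
      rw [this]
    · rintro ⟨h, hh, rfl⟩
      refine ⟨h, hh, ?_⟩
      have := hAll (h.x, h.y) ⟨h.z, hh⟩
      rw [lamlin_apply, lamlin_apply] at this
      rw [← this]

end main
/-- If `H` intersects the center trivially, then the number of distinct conjugates
`g⁻¹Hg` of `H` in `G` equals the cardinality of `S_H`. -/
theorem card_conjugates_eq_card_SH (p n : ℕ) [Fact p.Prime] (hn : 1 ≤ n)
    (H : Subgroup (WH p n)) (hZ : H ⊓ Subgroup.center (WH p n) = ⊥) :
    Nat.card {K : Subgroup (WH p n) |
        ∃ g : WH p n, (K : Set (WH p n)) = (fun h => g⁻¹ * h * g) '' (H : Set (WH p n))} =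
      Nat.card (SH H) := by
  classical
  have hset : {K : Subgroup (WH p n) |
      ∃ g : WH p n, (K : Set (WH p n)) = (fun h => g⁻¹ * h * g) '' (H : Set (WH p n))} =
      Set.range (Fconj H) := by
    ext K
    constructor
    · rintro ⟨g, hg⟩
      refine ⟨(g.x, g.y), ?_⟩
      apply SetLike.coe_injective
      have hfun : (fun h : WH p n => (gvF (g.x, g.y))⁻¹ * h * gvF (g.x, g.y)) =
          fun h => g⁻¹ * h * g := by
        funext h
        rw [WH.conj_eq, WH.conj_eq]
        rfl
      rw [coe_Fconj, hg, hfun]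
    · rintro ⟨v, rfl⟩
      exact ⟨gvF v, (coe_Fconj H v)⟩
  rw [hset]
  have hker : Setoid.ker (Fconj H) = Setoid.ker (Phi H) :=
    Setoid.ext fun v w => Fconj_eq_iff hZ
  have e1 : Set.range (Fconj H) ≃ Quotient (Setoid.ker (Fconj H)) :=
    (Setoid.quotientKerEquivRange _).symm
  have e2 : Quotient (Setoid.ker (Phi H)) ≃ Set.range (Phi H) :=
    Setoid.quotientKerEquivRange _
  have hrange : Set.range (Phi H) = Set.univ := Set.range_eq_univ.mpr (Phi_surjective H)
  have hd1 : Nat.card (Set.range (Fconj H)) = Nat.card (Module.Dual (ZMod p) (Smod H)) := by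
    calc Nat.card (Set.range (Fconj H))
        = Nat.card (Quotient (Setoid.ker (Fconj H))) := Nat.card_congr e1
      _ = Nat.card (Quotient (Setoid.ker (Phi H))) := by rw [hker]
      _ = Nat.card (Set.range (Phi H)) := Nat.card_congr e2
      _ = Nat.card (Module.Dual (ZMod p) (Smod H)) := by
          rw [hrange]; exact Nat.card_congr (Equiv.Set.univ _)
  rw [hd1]
  have : FiniteDimensional (ZMod p) (Vs p n) := inferInstance
  have e3 : Module.Dual (ZMod p) (Smod H) ≃ₗ[ZMod p] (Smod H) :=
    LinearEquiv.ofFinrankEq _ _ Subspace.dual_finrank_eq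
  rw [Nat.card_congr e3.toEquiv]
  exact Nat.card_congr (Equiv.subtypeEquivRight fun x => Iff.rfl)
end

section
/- Let p be an odd prime and let H be an abelian subgroup of the Weyl–Heisenberg group G that does not contain the center of G. Then H₀ := {(x, y, 2⁻¹·(x·y)) : (x,y) ∈ S_H}, where 2⁻¹ is the inverse of 2 in ℤ/pℤ, is a subgroup of G, and H₀ is conjugate to H in G. -/
section Aux

variable {p n : ℕ}

lemma dot_add_left (u v w : Fin n → ZMod p) : dot (u + v) w = dot u w + dot v w := by
  simp [dot, add_mul, Finset.sum_add_distrib]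

lemma dot_add_right (u v w : Fin n → ZMod p) : dot u (v + w) = dot u v + dot u w := by
  simp [dot, mul_add, Finset.sum_add_distrib]

lemma dot_neg_left (u v : Fin n → ZMod p) : dot (-u) v = -dot u v := by
  simp [dot, neg_mul, Finset.sum_neg_distrib]

lemma dot_neg_right (u v : Fin n → ZMod p) : dot u (-v) = -dot u v := by
  simp [dot, mul_neg, Finset.sum_neg_distrib]

lemma dot_zero_left (v : Fin n → ZMod p) : dot (0 : Fin n → ZMod p) v = 0 := by simp [dot]

lemma dot_zero_right (v : Fin n → ZMod p) : dot v (0 : Fin n → ZMod p) = 0 := by simp [dot]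

lemma dot_comm (u v : Fin n → ZMod p) : dot u v = dot v u := by
  simp [dot, mul_comm]

lemma dot_single_one_left (i : Fin n) (v : Fin n → ZMod p) :
    dot (Pi.single i 1) v = v i := by
  simp [dot, Pi.single_apply, ite_mul]

lemma dot_single_one_right (i : Fin n) (v : Fin n → ZMod p) :
    dot v (Pi.single i 1) = v i := by
  simp [dot, Pi.single_apply, mul_ite]

lemma WH.conj_formula (a b c x y z : _) :
    (⟨a, b, c⟩ : WH p n)⁻¹ * ⟨x, y, z⟩ * ⟨a, b, c⟩ =
      ⟨x, y, z + dot a y - dot x b⟩ := by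
  show WH.wmul (WH.wmul (WH.winv ⟨a, b, c⟩) ⟨x, y, z⟩) ⟨a, b, c⟩ = _
  simp only [WH.wmul, WH.winv, dot, WH.mk.injEq, Pi.add_apply, Pi.neg_apply, mul_neg, neg_mul,
    mul_add, add_mul, Finset.sum_add_distrib, Finset.sum_neg_distrib]
  refine ⟨by abel, by abel, by ring⟩

lemma WH.inv_mul_same (x y z z' : _) :
    (⟨x, y, z⟩ : WH p n)⁻¹ * ⟨x, y, z'⟩ = ⟨0, 0, z' - z⟩ := by
  show WH.wmul (WH.winv ⟨x, y, z⟩) ⟨x, y, z'⟩ = _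
  simp only [WH.wmul, WH.winv, dot, WH.mk.injEq, Pi.add_apply, Pi.neg_apply, mul_neg, neg_mul,
    Finset.sum_neg_distrib]
  refine ⟨by funext i; exact neg_add_cancel _, by funext i; exact neg_add_cancel _, by ring⟩

lemma WH.central_pow (t : ZMod p) (k : ℕ) :
    (⟨0, 0, t⟩ : WH p n) ^ k = ⟨0, 0, (k : ZMod p) * t⟩ := by
  induction k with
  | zero => simp [WH.one_def]
  | succ k ih =>
    rw [pow_succ, ih, WH.mul_def]
    have hd : dot (0 : Fin n → ZMod p) (0 : Fin n → ZMod p) = 0 := dot_zero_left _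
    simp only [WH.mk.injEq, hd, add_zero]
    refine ⟨by simp, by simp, by push_cast; ring⟩

lemma hsingle_sum (x : Fin n → ZMod p) :
    ∑ i, x i • (Pi.single i 1 : Fin n → ZMod p) = x := by
  have : ∀ i, x i • (Pi.single i 1 : Fin n → ZMod p) = Pi.single i (x i) := by
    intro i
    funext j
    simp [Pi.single_apply]
  simp_rw [this]
  exact Finset.univ_sum_single x

end Aux

/-- For odd `p`, if `H` is an abelian subgroup of the Weyl–Heisenberg group not containing
the center, then `H₀ = {(x, y, 2⁻¹·(x·y)) : (x,y) ∈ S_H}` is a subgroup of `G` that is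
conjugate to `H`. -/
theorem H0_subgroup_conjugate (p n : ℕ) [Fact p.Prime] (hp : p ≠ 2) (hn : 1 ≤ n)
    (H : Subgroup (WH p n))
    (hab : ∀ a ∈ H, ∀ b ∈ H, a * b = b * a)
    (hZ : ¬ Subgroup.center (WH p n) ≤ H) :
    ∃ H₀ : Subgroup (WH p n),
      (H₀ : Set (WH p n)) =
          {g : WH p n | (g.x, g.y) ∈ SH H ∧ g.z = (2 : ZMod p)⁻¹ * dot g.x g.y} ∧
      ∃ g : WH p n,
        (H₀ : Set (WH p n)) = (fun h => g⁻¹ * h * g) '' (H : Set (WH p n)) := by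
  classical
  -- 2 is invertible
  have hp2 : (2 : ZMod p) ≠ 0 := by
    intro h
    have hd : (p : ℕ) ∣ 2 := by
      have : ((2 : ℕ) : ZMod p) = 0 := by exact_mod_cast h
      exact (ZMod.natCast_eq_zero_iff 2 p).mp this
    exact hp ((Nat.prime_dvd_prime_iff_eq Fact.out Nat.prime_two).mp hd)
  have h2 : (2 : ZMod p)⁻¹ * 2 = 1 := inv_mul_cancel₀ hp2
  -- H contains no nontrivial central element
  have hcent : ∀ t : ZMod p, (⟨0, 0, t⟩ : WH p n) ∈ H → t = 0 := by
    intro t ht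
    by_contra htne
    apply hZ
    intro w hw
    rw [Subgroup.mem_center_iff] at hw
    obtain ⟨wx, wy, wz⟩ := w
    have hy : wy = 0 := by
      funext i
      have h0 := congrArg WH.z (hw ⟨Pi.single i 1, 0, 0⟩)
      simp only [WH.mul_def] at h0
      simpa [dot_zero_right, dot_single_one_left] using h0.symm
    have hx : wx = 0 := by
      funext i
      have h0 := congrArg WH.z (hw ⟨0, Pi.single i 1, 0⟩)
      simp only [WH.mul_def] at h0
      simpa [dot_zero_left, dot_single_one_right] using h0
    subst hx; subst hy
    have hpow : (⟨0, 0, wz⟩ : WH p n) = (⟨0, 0, t⟩ : WH p n) ^ (wz * t⁻¹).val := by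
      rw [WH.central_pow]
      have hval : (((wz * t⁻¹).val : ℕ) : ZMod p) * t = wz := by
        rw [ZMod.natCast_val, ZMod.cast_id, mul_assoc, inv_mul_cancel₀ htne, mul_one]
      rw [hval]
    rw [hpow]
    exact pow_mem ht _
  -- the section f picking the z-coordinate
  let f : (Fin n → ZMod p) × (Fin n → ZMod p) → ZMod p :=
    fun v => if h : v ∈ SH H then h.choose else 0
  have hf : ∀ v (hv : v ∈ SH H), (⟨v.1, v.2, f v⟩ : WH p n) ∈ H := by
    intro v hv
    simp only [f, dif_pos hv]
    exact hv.choose_spec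
  have huniq : ∀ (v : (Fin n → ZMod p) × (Fin n → ZMod p)) (z : ZMod p),
      (⟨v.1, v.2, z⟩ : WH p n) ∈ H → z = f v := by
    intro v z hz
    have hv : v ∈ SH H := ⟨z, hz⟩
    have hmem := H.mul_mem (H.inv_mem hz) (hf v hv)
    rw [WH.inv_mul_same] at hmem
    have h0 := sub_eq_zero.mp (hcent _ hmem)
    exact h0.symm
  -- isotropy of S_H
  have hiso : ∀ v ∈ SH H, ∀ w ∈ SH H,
      dot w.1 v.2 = dot v.1 w.2 := by
    intro v hv w hw
    have hc := hab _ (hf v hv) _ (hf w hw)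
    have h0 := congrArg WH.z hc
    simp only [WH.mul_def] at h0
    linear_combination h0
  -- quasi-additivity of f
  have hfadd : ∀ v ∈ SH H, ∀ w ∈ SH H,
      f (v + w) = f v + f w + dot w.1 v.2 := by
    intro v hv w hw
    have hmem := H.mul_mem (hf v hv) (hf w hw)
    rw [WH.mul_def] at hmem
    exact (huniq (v + w) _ hmem).symm
  -- S_H as an additive subgroup
  let S : AddSubgroup ((Fin n → ZMod p) × (Fin n → ZMod p)) :=
    { carrier := SH H
      zero_mem' := ⟨0, H.one_mem⟩
      add_mem' := by
        intro v w hv hw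
        have hmem := H.mul_mem (hf v hv) (hf w hw)
        rw [WH.mul_def] at hmem
        exact ⟨_, hmem⟩
      neg_mem' := by
        intro v hv
        have hmem := H.inv_mem (hf v hv)
        exact ⟨_, hmem⟩ }
  let S' : Submodule (ZMod p) ((Fin n → ZMod p) × (Fin n → ZMod p)) :=
    AddSubgroup.toZModSubmodule p S
  have hS' : ∀ v : (Fin n → ZMod p) × (Fin n → ZMod p), v ∈ S' ↔ v ∈ SH H := fun v => Iff.rfl
  -- the additive character φ on S
  have hf0 : f 0 = 0 := (huniq 0 0 H.one_mem).symm
  let φ : ↥S' →+ ZMod p :=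
    { toFun := fun s => f s.1 - (2 : ZMod p)⁻¹ * dot s.1.1 s.1.2
      map_zero' := by
        show f (0, 0) - (2 : ZMod p)⁻¹ * dot 0 0 = 0
        have : ((0, 0) : (Fin n → ZMod p) × (Fin n → ZMod p)) = 0 := rfl
        rw [this, hf0, dot_zero_left, mul_zero, sub_zero]
      map_add' := by
        rintro ⟨s, hsm⟩ ⟨t, htm⟩
        have hs : s ∈ SH H := (hS' _).mp hsm
        have ht : t ∈ SH H := (hS' _).mp htm
        show f (s + t) - (2 : ZMod p)⁻¹ * dot (s + t).1 (s + t).2 = _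
        rw [hfadd _ hs _ ht]
        have hdd : dot (s + t).1 (s + t).2 =
            dot s.1 s.2 + dot s.1 t.2 + dot t.1 s.2 + dot t.1 t.2 := by
          show dot (s.1 + t.1) (s.2 + t.2) = _
          rw [dot_add_left, dot_add_right, dot_add_right]
          ring
        rw [hdd, ← hiso _ hs _ ht]
        show _ = f s - (2 : ZMod p)⁻¹ * dot s.1 s.2 + (f t - (2 : ZMod p)⁻¹ * dot t.1 t.2)
        linear_combination (-(dot t.1 s.2)) * h2 }
  obtain ⟨L, hL⟩ := LinearMap.exists_extend (φ.toZModLinearMap p)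
  have hLφ : ∀ v (hv : v ∈ SH H), L v = f v - (2 : ZMod p)⁻¹ * dot v.1 v.2 := by
    intro v hv
    have := LinearMap.ext_iff.mp hL ⟨v, (hS' v).mpr hv⟩
    exact this
  -- represent L via vectors a, b
  let b : Fin n → ZMod p := fun i => L (Pi.single i 1, 0)
  let a : Fin n → ZMod p := fun i => -L (0, Pi.single i 1)
  have hrep : ∀ x y : Fin n → ZMod p, dot x b - dot a y = L (x, y) := by
    intro x y
    have hx : (x, (0 : Fin n → ZMod p)) =
        ∑ i, x i • ((Pi.single i 1 : Fin n → ZMod p), (0 : Fin n → ZMod p)) := by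
      apply Prod.ext
      · rw [Prod.fst_sum]
        simp only [Prod.smul_mk, Prod.mk.injEq]
        exact (hsingle_sum x).symm
      · rw [Prod.snd_sum]
        simp
    have hy : ((0 : Fin n → ZMod p), y) =
        ∑ i, y i • ((0 : Fin n → ZMod p), (Pi.single i 1 : Fin n → ZMod p)) := by
      apply Prod.ext
      · rw [Prod.fst_sum]
        simp
      · rw [Prod.snd_sum]
        simp only [Prod.smul_mk, Prod.mk.injEq]
        exact (hsingle_sum y).symm
    have hxy : (x, y) = (x, (0 : Fin n → ZMod p)) + ((0 : Fin n → ZMod p), y) := by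
      rw [Prod.mk_add_mk, add_zero, zero_add]
    rw [hxy, map_add, hx, hy, map_sum, map_sum]
    simp only [map_smul, smul_eq_mul]
    show dot x b - dot a y = _
    simp only [dot, a, b, neg_mul, mul_neg, Finset.sum_neg_distrib, sub_neg_eq_add]
    congr 1
    exact Finset.sum_congr rfl fun i _ => mul_comm _ _
  -- the conjugating element
  set g : WH p n := ⟨a, b, 0⟩ with hg
  refine ⟨H.map (MulAut.conj g⁻¹).toMonoidHom, ?_, g, ?_⟩
  · ext w
    simp only [Subgroup.coe_map, Set.mem_image, SetLike.mem_coe, MulEquiv.coe_toMonoidHom,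
      MulAut.conj_apply, inv_inv, Set.mem_setOf_eq]
    constructor
    · rintro ⟨h, hh, rfl⟩
      obtain ⟨x, y, z⟩ := h
      rw [hg, WH.conj_formula]
      refine ⟨⟨z, hh⟩, ?_⟩
      have hz : z = f (x, y) := huniq (x, y) z hh
      have hL1 : L (x, y) = f (x, y) - (2 : ZMod p)⁻¹ * dot x y := hLφ (x, y) ⟨z, hh⟩
      have hr := hrep x y
      show z + dot a y - dot x b = (2 : ZMod p)⁻¹ * dot x y
      linear_combination hz - hr - hL1
    · rintro ⟨hv, hz⟩
      obtain ⟨x, y, z⟩ := w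
      simp only at hv hz
      refine ⟨⟨x, y, f (x, y)⟩, hf (x, y) hv, ?_⟩
      rw [hg, WH.conj_formula]
      have hL1 : L (x, y) = f (x, y) - (2 : ZMod p)⁻¹ * dot x y := hLφ (x, y) hv
      have hr := hrep x y
      ext
      · rfl
      · rfl
      · show f (x, y) + dot a y - dot x b = z
        rw [hz]
        linear_combination (- hr) - hL1
  · rw [Subgroup.coe_map]
    have hfun : ⇑(MulAut.conj g⁻¹).toMonoidHom = fun h => g⁻¹ * h * g := by
      funext h
      simp [MulAut.conj_apply]
    rw [hfun]
end
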